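/- Let f:[a,b]→ℝ be continuous and Φ-affine, i.e., |f(tx+(1−t)y) − t f(x) − (1−t) f(y)| ≤ t Φ((1−t)|y−x|) + (1−t) Φ(t|y−x|) for all x,y ∈ [a,b] and t ∈ [0,1]. Then for every even n ≥ 2, max{f((a+b)/2) − E_n, (f(a)+f(b))/2 − ((n²−1)/6)Φ((b−a)/n)} ≤ T_n(f)/(b−a) ≤ min{f((a+b)/2) + E_n, (f(a)+f(b))/2 + ((n²−1)/6)Φ((b−a)/n)}, where E_n = ((n²+2)/12)·Φ((b−a)/n). -/

import Mathlib

open Finset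

set_option maxHeartbeats 1000000
open Finset

lemma sbp (φ g : ℕ → ℝ) : ∀ N : ℕ,
    ∑ j ∈ Finset.Ico 1 (N+1),
      (φ j * (g (j+1) - 2*g j + g (j-1)) - (φ (j+1) - 2*φ j + φ (j-1)) * g j)
    = (φ N * g (N+1) - φ (N+1) * g N) - (φ 0 * g 1 - φ 1 * g 0)
  | 0 => by simp
  | (N+1) => by
      rw [Finset.sum_Ico_succ_top (by omega), sbp φ g N]
      simp only [Nat.add_sub_cancel]
      ring

lemma sum_id_real : ∀ k : ℕ, ∑ j ∈ Finset.range k, (j:ℝ) = (k:ℝ)*((k:ℝ)-1)/2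
  | 0 => by simp
  | (k+1) => by
      rw [Finset.sum_range_succ, sum_id_real k]; push_cast; ring

lemma sum_sq_real : ∀ k : ℕ, ∑ j ∈ Finset.range k, (j:ℝ)^2 = (k:ℝ)*((k:ℝ)-1)*(2*(k:ℝ)-1)/6
  | 0 => by simp
  | (k+1) => by
      rw [Finset.sum_range_succ, sum_sq_real k]; push_cast; ring

lemma sum_sq_desc : ∀ k : ℕ, ∑ i ∈ Finset.range k, ((k:ℝ) - 1 - (i:ℝ))^2 = (k:ℝ)*((k:ℝ)-1)*(2*(k:ℝ)-1)/6
  | 0 => by simp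
  | (k+1) => by
      rw [Finset.sum_range_succ']
      have h1 : ∀ i ∈ Finset.range k,
          (((k+1:ℕ):ℝ) - 1 - ((i+1:ℕ):ℝ))^2 = ((k:ℝ) - 1 - (i:ℝ))^2 := by
        intro i _; push_cast; ring
      rw [Finset.sum_congr rfl h1, sum_sq_desc k]; push_cast; ring

lemma sum_sq_desc2 : ∀ k : ℕ, ∑ i ∈ Finset.range k, ((k:ℝ) - (i:ℝ))^2 = (k:ℝ)*((k:ℝ)+1)*(2*(k:ℝ)+1)/6
  | 0 => by simp
  | (k+1) => by
      rw [Finset.sum_range_succ']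
      have h1 : ∀ i ∈ Finset.range k,
          (((k+1:ℕ):ℝ) - ((i+1:ℕ):ℝ))^2 = ((k:ℝ) - (i:ℝ))^2 := by
        intro i _; push_cast; ring
      rw [Finset.sum_congr rfl h1, sum_sq_desc2 k]; push_cast; ring


theorem trapezoid_phi_affine
    (a b : ℝ) (hab : a < b) (f Φ : ℝ → ℝ)
    (hΦ : ∀ t ∈ Set.Icc (0 : ℝ) (b - a), 0 ≤ Φ t)
    (hf : ContinuousOn f (Set.Icc a b))
    (haff : ∀ x ∈ Set.Icc a b, ∀ y ∈ Set.Icc a b, ∀ t ∈ Set.Icc (0:ℝ) 1, |f (t * x + (1 - t) * y) - t * f x - (1 - t) * f y| ≤ t * Φ ((1 - t) * |y - x|) + (1 - t) * Φ (t * |y - x|))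
    (n : ℕ) (hn : 2 ≤ n) (hne : Even n) :
    max (f ((a + b) / 2) - (((n : ℝ) ^ 2 + 2) / 12) * Φ ((b - a) / n))
        ((f a + f b) / 2 - (((n : ℝ) ^ 2 - 1) / 6) * Φ ((b - a) / n)) ≤ ((b - a) / (2 * n) * (f a + 2 * ∑ i ∈ Finset.Ico 1 n, f (a + i * (b - a) / n) + f b)) / (b - a) ∧
    ((b - a) / (2 * n) * (f a + 2 * ∑ i ∈ Finset.Ico 1 n, f (a + i * (b - a) / n) + f b)) / (b - a) ≤
      min (f ((a + b) / 2) + (((n : ℝ) ^ 2 + 2) / 12) * Φ ((b - a) / n))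
        ((f a + f b) / 2 + (((n : ℝ) ^ 2 - 1) / 6) * Φ ((b - a) / n)) := by
  obtain ⟨m, hm⟩ := hne
  have hm2 : n = 2 * m := by omega
  have hm1 : 1 ≤ m := by omega
  have hn0 : 0 < n := by omega
  have hba : (0:ℝ) < b - a := sub_pos.2 hab
  have hnR : (0:ℝ) < (n:ℝ) := by exact_mod_cast hn0
  have hnne : (n:ℝ) ≠ 0 := ne_of_gt hnR
  have hh0 : 0 < (b - a) / n := div_pos hba hnR
  set c : ℝ := Φ ((b - a) / n) with hc
  have hc0 : 0 ≤ c := hΦ _ ⟨le_of_lt hh0,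
    div_le_self (le_of_lt hba) (by exact_mod_cast hn0)⟩
  set g : ℕ → ℝ := fun i => f (a + i * (b - a) / n) with hg
  set w : ℕ → ℝ := fun j => g (j+1) - 2 * g j + g (j-1) with hw
  -- membership
  have hmem : ∀ k : ℝ, 0 ≤ k → k ≤ n → a + k * (b - a) / n ∈ Set.Icc a b := by
    intro k hk0 hkn
    constructor
    · have : 0 ≤ k * (b - a) / n := by positivity
      linarith
    · have : k * (b - a) / n ≤ b - a := by
        rw [div_le_iff₀ hnR]; nlinarith
      linarith
  have hstep : ∀ j ∈ Finset.Ico 1 n, |w j| ≤ 2 * c := by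
    intro j hj
    rw [Finset.mem_Ico] at hj
    obtain ⟨hj1, hj2⟩ := hj
    have hjR : (1:ℝ) ≤ (j:ℝ) := by exact_mod_cast hj1
    have hjn : (j:ℝ) + 1 ≤ (n:ℝ) := by exact_mod_cast hj2
    have hp : a + ((j:ℝ) - 1) * (b - a) / n ∈ Set.Icc a b := hmem _ (by linarith) (by linarith)
    have hq : a + ((j:ℝ) + 1) * (b - a) / n ∈ Set.Icc a b := hmem _ (by linarith) hjn
    have H := haff _ hp _ hq (1/2) (by norm_num)
    have e1 : (1/2:ℝ) * (a + ((j:ℝ) - 1) * (b - a) / n) + (1 - 1/2) * (a + ((j:ℝ) + 1) * (b - a) / n)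
        = a + (j:ℝ) * (b - a) / n := by field_simp; ring
    have e2 : |(a + ((j:ℝ) + 1) * (b - a) / n) - (a + ((j:ℝ) - 1) * (b - a) / n)|
        = 2 * ((b - a) / n) := by
      have e2' : (a + ((j:ℝ) + 1) * (b - a) / n) - (a + ((j:ℝ) - 1) * (b - a) / n)
          = 2 * ((b - a) / n) := by field_simp; ring
      rw [e2']; exact abs_of_nonneg (by positivity)
    rw [e1, e2] at H
    have e3 : (1 - (1/2:ℝ)) * (2 * ((b - a) / n)) = (b - a) / n := by ring
    have e4 : ((1/2:ℝ)) * (2 * ((b - a) / n)) = (b - a) / n := by ring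
    rw [e3, e4] at H
    have gj1 : g (j+1) = f (a + ((j:ℝ) + 1) * (b - a) / n) := by
      simp only [hg]; congr 2; push_cast; ring
    have gj0 : g (j-1) = f (a + ((j:ℝ) - 1) * (b - a) / n) := by
      simp only [hg]; congr 2; rw [Nat.cast_sub hj1]; push_cast; ring
    have hwj : w j = (-2) * (g j - 1/2 * f (a + ((j:ℝ) - 1) * (b - a) / n)
        - (1 - 1/2) * f (a + ((j:ℝ) + 1) * (b - a) / n)) := by
      simp only [hw]; rw [gj1, gj0]; ring
    calc |w j| = 2 * |g j - 1/2 * f (a + ((j:ℝ) - 1) * (b - a) / n)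
        - (1 - 1/2) * f (a + ((j:ℝ) + 1) * (b - a) / n)| := by
          rw [hwj, abs_mul]; norm_num
      _ ≤ 2 * (1/2 * c + (1 - 1/2) * c) := by
          have := H; nlinarith [abs_nonneg (w j)]
      _ = 2 * c := by ring
  -- generic double summation by parts on Ico 1 n
  have key : ∀ φ : ℕ → ℝ, ∑ j ∈ Finset.Ico 1 n, φ j * w j
      = ∑ j ∈ Finset.Ico 1 n, (φ (j+1) - 2*φ j + φ (j-1)) * g j
        + ((φ (n-1) * g n - φ n * g (n-1)) - (φ 0 * g 1 - φ 1 * g 0)) := by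
    intro φ
    have h1 := sbp φ g (n-1)
    rw [show n - 1 + 1 = n from by omega] at h1
    rw [Finset.sum_sub_distrib] at h1
    simp only [hw]
    linarith
  set φ : ℕ → ℝ := fun j => (j:ℝ) * ((n:ℝ) - (j:ℝ)) with hφdef
  set ρ : ℕ → ℝ := fun j => min ((j:ℝ)) ((n:ℝ) - (j:ℝ)) with hρdef
  set S : ℝ := ∑ j ∈ Finset.Ico 1 n, φ j * w j with hS
  set R : ℝ := ∑ j ∈ Finset.Ico 1 n, ρ j * w j with hR
  -- claim S
  have claimS : S = (-2) * ∑ i ∈ Finset.Ico 1 n, g i + ((n:ℝ) - 1) * (g n + g 0) := by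
    rw [hS, key φ]
    have h2 : ∀ j ∈ Finset.Ico 1 n, (φ (j+1) - 2*φ j + φ (j-1)) * g j = (-2) * g j := by
      intro j hj
      rw [Finset.mem_Ico] at hj
      simp only [hφdef]
      rw [Nat.cast_sub hj.1]
      push_cast
      ring
    rw [Finset.sum_congr rfl h2, ← Finset.mul_sum]
    have b1 : φ (n-1) = (n:ℝ) - 1 := by
      simp only [hφdef]; rw [Nat.cast_sub hn0]; push_cast; ring
    have b2 : φ n = 0 := by simp [hφdef]
    have b3 : φ 0 = 0 := by simp [hφdef]
    have b4 : φ 1 = (n:ℝ) - 1 := by simp [hφdef]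
    rw [b1, b2, b3, b4]; ring
  -- claim R
  have hρle : ∀ k : ℕ, k ≤ m → ρ k = (k:ℝ) := by
    intro k hk
    simp only [hρdef]
    apply min_eq_left
    have : (k:ℝ) ≤ (m:ℝ) := by exact_mod_cast hk
    have : (n:ℝ) = 2*(m:ℝ) := by exact_mod_cast hm2
    linarith
  have hρge : ∀ k : ℕ, m ≤ k → ρ k = (n:ℝ) - (k:ℝ) := by
    intro k hk
    simp only [hρdef]
    apply min_eq_right
    have : (m:ℝ) ≤ (k:ℝ) := by exact_mod_cast hk
    have : (n:ℝ) = 2*(m:ℝ) := by exact_mod_cast hm2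
    linarith
  have hnm : (n:ℝ) = 2*(m:ℝ) := by exact_mod_cast hm2
  have claimR : R = -2 * g m + (g n + g 0) := by
    rw [hR, key ρ]
    have h2 : ∀ j ∈ Finset.Ico 1 n, (ρ (j+1) - 2*ρ j + ρ (j-1)) * g j
        = if j = m then (-2) * g j else 0 := by
      intro j hj
      rw [Finset.mem_Ico] at hj
      rcases lt_trichotomy j m with hlt | heq | hgt
      · rw [if_neg (by omega)]
        rw [hρle (j+1) (by omega), hρle j (by omega), hρle (j-1) (by omega),
          Nat.cast_sub hj.1]
        push_cast; ring
      · rw [if_pos heq, heq]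
        rw [hρge (m+1) (by omega), hρle m le_rfl, hρle (m-1) (by omega),
          Nat.cast_sub hm1]
        push_cast [hnm]; ring
      · rw [if_neg (by omega)]
        rw [hρge (j+1) (by omega), hρge j (by omega), hρge (j-1) (by omega),
          Nat.cast_sub hj.1]
        push_cast; ring
    rw [Finset.sum_congr rfl h2, Finset.sum_ite_eq' (Finset.Ico 1 n) m (fun j => (-2) * g j),
      if_pos (by rw [Finset.mem_Ico]; omega)]
    have b1 : ρ (n-1) = 1 := by
      rw [hρge (n-1) (by omega), Nat.cast_sub hn0]; push_cast; ring
    have b2 : ρ n = 0 := by rw [hρge n (by omega)]; ring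
    have b3 : ρ 0 = 0 := by simp [hρdef]
    have b4 : ρ 1 = 1 := by rw [hρle 1 hm1]; norm_num
    rw [b1, b2, b3, b4]; ring
  have hφnn : ∀ j ∈ Finset.Ico 1 n, 0 ≤ φ j := by
    intro j hj
    rw [Finset.mem_Ico] at hj
    have h1 : (j:ℝ) ≤ (n:ℝ) := by exact_mod_cast hj.2.le
    simp only [hφdef]
    have h2 : (0:ℝ) ≤ (n:ℝ) - (j:ℝ) := by linarith
    positivity
  have sumφ : ∑ j ∈ Finset.Ico 1 n, φ j = (n:ℝ)*((n:ℝ)^2-1)/6 := by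
    have h0 : ∑ j ∈ Finset.range n, φ j = φ 0 + ∑ j ∈ Finset.Ico 1 n, φ j := by
      rw [Finset.range_eq_Ico, ← Finset.sum_eq_sum_Ico_succ_bot hn0]
    have h1 : ∀ j ∈ Finset.range n, φ j = (n:ℝ)*(j:ℝ) - (j:ℝ)^2 := by
      intro j _; simp only [hφdef]; ring
    have h2 : ∑ j ∈ Finset.range n, φ j = (n:ℝ)*((n:ℝ)^2-1)/6 := by
      rw [Finset.sum_congr rfl h1, Finset.sum_sub_distrib, ← Finset.mul_sum,
        sum_id_real, sum_sq_real]
      ring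
    have h3 : φ 0 = 0 := by simp [hφdef]
    rw [h2, h3] at h0
    linarith
  have sumρsq : ∑ j ∈ Finset.Ico 1 n, (ρ j)^2 = (n:ℝ)*((n:ℝ)^2+2)/12 := by
    rw [← Finset.sum_Ico_consecutive _ (by omega : 1 ≤ m+1) (by omega : m+1 ≤ n)]
    have p1 : ∑ j ∈ Finset.Ico 1 (m+1), (ρ j)^2 = (m:ℝ)*((m:ℝ)+1)*(2*(m:ℝ)+1)/6 := by
      have h1 : ∀ j ∈ Finset.Ico 1 (m+1), (ρ j)^2 = (j:ℝ)^2 := by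
        intro j hj; rw [Finset.mem_Ico] at hj
        rw [hρle j (by omega)]
      rw [Finset.sum_congr rfl h1]
      have h0 := Finset.sum_eq_sum_Ico_succ_bot (show 0 < m+1 by omega)
        (fun j : ℕ => (j:ℝ)^2)
      rw [← Finset.range_eq_Ico, sum_sq_real] at h0
      push_cast at h0 ⊢
      linarith
    have p2 : ∑ j ∈ Finset.Ico (m+1) n, (ρ j)^2 = ((m:ℝ)-1)*(m:ℝ)*(2*(m:ℝ)-1)/6 := by
      have h1 : ∀ j ∈ Finset.Ico (m+1) n, (ρ j)^2 = ((n:ℝ) - (j:ℝ))^2 := by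
        intro j hj; rw [Finset.mem_Ico] at hj
        rw [hρge j (by omega)]
      rw [Finset.sum_congr rfl h1, Finset.sum_Ico_eq_sum_range,
        show n - (m+1) = m - 1 from by omega]
      have h2 : ∀ i ∈ Finset.range (m-1),
          ((n:ℝ) - ((m+1+i:ℕ):ℝ))^2 = (((m - 1 : ℕ) : ℝ) - (i:ℝ))^2 := by
        intro i _
        rw [Nat.cast_sub hm1]
        push_cast [hnm]; ring
      rw [Finset.sum_congr rfl h2, sum_sq_desc2 (m-1), Nat.cast_sub hm1]
      push_cast; ring
    rw [p1, p2, hnm]; ring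
  -- bounds
  have boundS : |S| ≤ 2*c*((n:ℝ)*((n:ℝ)^2-1)/6) := by
    calc |S| ≤ ∑ j ∈ Finset.Ico 1 n, |φ j * w j| := by
          rw [hS]; exact Finset.abs_sum_le_sum_abs _ _
      _ ≤ ∑ j ∈ Finset.Ico 1 n, φ j * (2*c) := by
          apply Finset.sum_le_sum
          intro j hj
          rw [abs_mul, abs_of_nonneg (hφnn j hj)]
          exact mul_le_mul_of_nonneg_left (hstep j hj) (hφnn j hj)
      _ = 2*c*((n:ℝ)*((n:ℝ)^2-1)/6) := by rw [← Finset.sum_mul, sumφ]; ring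
  have coefabs : ∀ j ∈ Finset.Ico 1 n, |ρ j / 2 - φ j / (2*(n:ℝ))|
      = (ρ j)^2 / (2*(n:ℝ)) := by
    intro j hj
    rw [Finset.mem_Ico] at hj
    rcases le_total j m with hle | hge
    · rw [hρle j hle]
      simp only [hφdef]
      have h1 : (j:ℝ)/2 - (j:ℝ)*((n:ℝ)-(j:ℝ))/(2*(n:ℝ)) = (j:ℝ)^2/(2*(n:ℝ)) := by
        field_simp; ring
      rw [h1]
      exact abs_of_nonneg (by positivity)
    · rw [hρge j hge]
      simp only [hφdef]
      have h1 : ((n:ℝ)-(j:ℝ))/2 - (j:ℝ)*((n:ℝ)-(j:ℝ))/(2*(n:ℝ))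
          = ((n:ℝ)-(j:ℝ))^2/(2*(n:ℝ)) := by
        field_simp
      rw [h1]
      exact abs_of_nonneg (by positivity)
  have boundA : |R/2 - S/(2*(n:ℝ))| ≤ c*((n:ℝ)^2+2)/12 := by
    have hRS : R/2 - S/(2*(n:ℝ)) = ∑ j ∈ Finset.Ico 1 n, (ρ j/2 - φ j/(2*(n:ℝ))) * w j := by
      rw [hR, hS, Finset.sum_div, Finset.sum_div, ← Finset.sum_sub_distrib]
      apply Finset.sum_congr rfl
      intro j _; ring
    rw [hRS]
    calc |∑ j ∈ Finset.Ico 1 n, (ρ j/2 - φ j/(2*(n:ℝ))) * w j|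
        ≤ ∑ j ∈ Finset.Ico 1 n, |(ρ j/2 - φ j/(2*(n:ℝ))) * w j| :=
          Finset.abs_sum_le_sum_abs _ _
      _ ≤ ∑ j ∈ Finset.Ico 1 n, (ρ j)^2 * (c/(n:ℝ)) := by
          apply Finset.sum_le_sum
          intro j hj
          rw [abs_mul, coefabs j hj]
          calc (ρ j)^2/(2*(n:ℝ)) * |w j| ≤ (ρ j)^2/(2*(n:ℝ)) * (2*c) :=
                mul_le_mul_of_nonneg_left (hstep j hj) (by positivity)
            _ = (ρ j)^2 * (c/(n:ℝ)) := by field_simp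
      _ = c*((n:ℝ)^2+2)/12 := by
          rw [← Finset.sum_mul, sumρsq]
          field_simp
  -- rewriting the goal
  have hg0 : g 0 = f a := by simp [hg]
  have hgn : g n = f b := by
    simp only [hg]; congr 1; field_simp; ring
  have hmid : f ((a + b)/2) = g m := by
    simp only [hg]; congr 1
    rw [hnm]
    have hmR : (0:ℝ) < (m:ℝ) := by exact_mod_cast hm1
    field_simp; ring
  clear_value c g w φ ρ S R
  have hE : ((b - a) / (2 * (n:ℝ)) * (f a + 2 * ∑ i ∈ Finset.Ico 1 n, g i + f b)) / (b - a)
      = (g 0 + g n)/2 - S/(2*(n:ℝ)) := by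
    have hSig : ∑ i ∈ Finset.Ico 1 n, g i = (((n:ℝ)-1)*(g n + g 0) - S)/2 := by
      linarith [claimS]
    rw [hSig, ← hg0, ← hgn]
    field_simp
    ring
  have hS2 : |S/(2*(n:ℝ))| ≤ c*((n:ℝ)^2-1)/6 := by
    rw [abs_div, abs_of_pos (by positivity : (0:ℝ) < 2*(n:ℝ)), div_le_iff₀ (by positivity)]
    calc |S| ≤ 2*c*((n:ℝ)*((n:ℝ)^2-1)/6) := boundS
      _ = c*((n:ℝ)^2-1)/6*(2*(n:ℝ)) := by ring
  have hRhalf : R/2 - S/(2*(n:ℝ)) = (g 0 + g n)/2 - S/(2*(n:ℝ)) - g m := by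
    rw [claimR]; ring
  rw [hRhalf] at boundA
  have hA' := abs_le.1 boundA
  have hS' := abs_le.1 hS2
  rw [hmid, hE]
  constructor
  · apply max_le
    · linarith [hA'.1]
    · linarith [hS'.2, hg0, hgn]
  · apply le_min
    · linarith [hA'.2]
    · linarith [hS'.1, hg0, hgn]
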